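/- Let C be a length-n linear code over a finite field F that admits (combinatorial) correction of 2r errors and s erasures, meaning any two distinct codewords c, c' satisfy Δ_S(c,c') > 4r for every S ⊆ [n] with |S| ≤ s. Suppose r ≤ (n-s)/(8e). Then for any fixed S with |S| ≤ s, if x is uniform on F^{[n]∖S}, the probability that some codeword c satisfies Δ_S(c,x) ≤ r is at most (r+1)·2^{-r}. -/

import Mathlib

open Finset

section Helpers

variable {ι F : Type*} [Fintype ι] [DecidableEq ι] [Fintype F] [DecidableEq F]

/-- The number of `y` differing from `x` exactly on the set `A`. -/
lemma fiber_card_eq (x : ι → F) (A : Finset ι) :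
    #{y : ι → F | ({i | x i ≠ y i} : Finset ι) = A} = (Fintype.card F - 1) ^ A.card := by
  have hset : ({y : ι → F | ({i | x i ≠ y i} : Finset ι) = A} : Finset (ι → F))
      = Fintype.piFinset (fun i => if i ∈ A then ({i' | i' ≠ x i} : Finset F) else {x i}) := by
    ext y
    simp only [mem_filter, mem_univ, true_and, Fintype.mem_piFinset]
    constructor
    · rintro rfl i
      by_cases h : x i ≠ y i <;> simp_all [ne_comm]
    · intro h
      ext i
      have hi := h i
      by_cases hA : i ∈ A <;> simp_all [ne_comm]
  rw [hset, Fintype.card_piFinset]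
  have : ∀ i : ι, (if i ∈ A then ({i' | i' ≠ x i} : Finset F) else {x i}).card
      = if i ∈ A then Fintype.card F - 1 else 1 := by
    intro i
    by_cases hA : i ∈ A <;> simp [hA, Finset.filter_ne', Finset.card_erase_of_mem]
  simp_rw [this]
  rw [Finset.prod_ite_mem, Finset.univ_inter, Finset.prod_const]

/-- Cardinality of a Hamming sphere. -/
lemma sphere_card_eq (x : ι → F) (k : ℕ) :
    #{y : ι → F | hammingDist x y = k}
      = (Fintype.card ι).choose k * (Fintype.card F - 1) ^ k := by
  have hmem : ∀ y ∈ ({y : ι → F | hammingDist x y = k} : Finset (ι → F)),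
      ({i | x i ≠ y i} : Finset ι) ∈ Finset.powersetCard k (univ : Finset ι) := by
    intro y hy
    simp only [mem_filter, mem_univ, true_and] at hy
    rw [Finset.mem_powersetCard_univ]
    exact hy
  rw [Finset.card_eq_sum_card_fiberwise hmem]
  have hcongr : ∀ A ∈ Finset.powersetCard k (univ : Finset ι),
      #{y ∈ ({y : ι → F | hammingDist x y = k} : Finset (ι → F)) |
          ({i | x i ≠ y i} : Finset ι) = A} = (Fintype.card F - 1) ^ k := by
    intro A hA
    rw [Finset.mem_powersetCard_univ] at hA
    rw [Finset.filter_filter]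
    have : ∀ y : ι → F, (hammingDist x y = k ∧ ({i | x i ≠ y i} : Finset ι) = A)
        ↔ ({i | x i ≠ y i} : Finset ι) = A := by
      intro y
      constructor
      · exact fun h => h.2
      · intro h
        refine ⟨?_, h⟩
        show ({i | x i ≠ y i} : Finset ι).card = k
        rw [h, hA]
    simp_rw [this]
    rw [fiber_card_eq x A, hA]
  rw [Finset.sum_congr rfl hcongr, Finset.sum_const, Finset.card_powersetCard,
    Finset.card_univ, smul_eq_mul]

lemma choose_mono_bot {m i r : ℕ} (h : i ≤ r) (hm : r * 2 ≤ m) :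
    m.choose i ≤ m.choose r := by
  induction r, h using Nat.le_induction with
  | base => exact le_rfl
  | succ k hk ih =>
    refine (ih (by omega)).trans (Nat.choose_le_succ_of_lt_half_left ?_)
    omega

lemma two_pow_mul_choose_le {m r : ℕ} (hm : 6 * r ≤ m) :
    2 ^ r * m.choose r ≤ m.choose (2 * r) := by
  have key : ∀ k, k ≤ r → 2 ^ k * m.choose r ≤ m.choose (r + k) := by
    intro k
    induction k with
    | zero => simp
    | succ k ih =>
      intro hk
      have h1 := ih (by omega)
      have h2 : 2 * m.choose (r + k) ≤ m.choose (r + k + 1) := by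
        have hc := Nat.choose_succ_right_eq m (r + k)
        have hle : 2 * (r + k + 1) ≤ m - (r + k) := by omega
        refine Nat.le_of_mul_le_mul_right ?_ (show 0 < r + k + 1 by omega)
        calc 2 * m.choose (r + k) * (r + k + 1)
            = m.choose (r + k) * (2 * (r + k + 1)) := by ring
          _ ≤ m.choose (r + k) * (m - (r + k)) := Nat.mul_le_mul_left _ hle
          _ = m.choose (r + k + 1) * (r + k + 1) := hc.symm
      calc 2 ^ (k + 1) * m.choose r = 2 * (2 ^ k * m.choose r) := by ring
        _ ≤ 2 * m.choose (r + k) := Nat.mul_le_mul_left 2 h1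
        _ ≤ m.choose (r + k + 1) := h2
  have := key r le_rfl
  rwa [show r + r = 2 * r by ring] at this

/-- Size bound for a Hamming ball of radius `r` when `6r ≤ |ι|`. -/
lemma ball_card_le (x : ι → F) {r : ℕ} (hm : 6 * r ≤ Fintype.card ι)
    (hq : 2 ≤ Fintype.card F) :
    #{y : ι → F | hammingDist x y ≤ r}
      ≤ (r + 1) * ((Fintype.card ι).choose r * (Fintype.card F - 1) ^ r) := by
  have hmem : ∀ y ∈ ({y : ι → F | hammingDist x y ≤ r} : Finset (ι → F)),
      hammingDist x y ∈ Finset.range (r + 1) := by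
    intro y hy
    simp only [mem_filter, mem_univ, true_and] at hy
    rw [Finset.mem_range]
    omega
  rw [Finset.card_eq_sum_card_fiberwise hmem]
  have hbound : ∀ k ∈ Finset.range (r + 1),
      #{y ∈ ({y : ι → F | hammingDist x y ≤ r} : Finset (ι → F)) | hammingDist x y = k}
        ≤ (Fintype.card ι).choose r * (Fintype.card F - 1) ^ r := by
    intro k hk
    rw [Finset.mem_range] at hk
    have hsub : #{y ∈ ({y : ι → F | hammingDist x y ≤ r} : Finset (ι → F)) |
        hammingDist x y = k} ≤ #{y : ι → F | hammingDist x y = k} := by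
      apply Finset.card_le_card
      intro y hy
      simp only [Finset.mem_filter, Finset.mem_univ, true_and] at hy ⊢
      exact hy.2
    refine hsub.trans ?_
    rw [sphere_card_eq]
    exact Nat.mul_le_mul (choose_mono_bot (by omega) (by omega))
      (Nat.pow_le_pow_right (by omega) (by omega))
  calc ∑ k ∈ Finset.range (r + 1),
        #{y ∈ ({y : ι → F | hammingDist x y ≤ r} : Finset (ι → F)) | hammingDist x y = k}
      ≤ (Finset.range (r + 1)).card
          • ((Fintype.card ι).choose r * (Fintype.card F - 1) ^ r) :=
        Finset.sum_le_card_nsmul _ _ _ hbound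
    _ = (r + 1) * ((Fintype.card ι).choose r * (Fintype.card F - 1) ^ r) := by
        rw [Finset.card_range, smul_eq_mul]

end Helpers

/-- random string is far from the code: let `C` be a length-`n` linear
code admitting combinatorial correction of `2r` errors and `s` erasures (any two
distinct codewords satisfy `Δ_S(c,c') > 4r` for every `|S| ≤ s`), with
`r ≤ (n-s)/(8e)`. Then for any fixed `S` with `|S| ≤ s` and `x` uniform on
`F^{[n]∖S}`, `P(∃ c ∈ C, Δ_S(c,x) ≤ r) ≤ (r+1)·2^{-r}`. -/
theorem stmt6 {F : Type*} [Field F] [Fintype F] [DecidableEq F] {n r s : ℕ}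
    (C : Submodule F (Fin n → F))
    (hC : ∀ S : Finset (Fin n), S.card ≤ s → ∀ c ∈ C, ∀ c' ∈ C, c ≠ c' →
      4 * r < (Finset.univ.filter (fun i : Fin n => i ∉ S ∧ c i ≠ c' i)).card)
    (hr : (r : ℝ) ≤ ((n : ℝ) - s) / (8 * Real.exp 1))
    (S : Finset (Fin n)) (hS : S.card ≤ s) :
    (Nat.card {x : {i : Fin n // i ∉ S} → F // ∃ c ∈ C,
        hammingDist (fun i : {i : Fin n // i ∉ S} => c i.1) x ≤ r} : ℝ)
      / (Fintype.card F : ℝ) ^ (Fintype.card {i : Fin n // i ∉ S})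
    ≤ ((r : ℝ) + 1) * ((2 : ℝ) ^ r)⁻¹ := by
  classical
  set ι := {i : Fin n // i ∉ S}
  set q := Fintype.card F with hq_def
  set m := Fintype.card ι with hm_def
  have hq : 2 ≤ q := Fintype.one_lt_card
  -- m = n - S.card, and 6r ≤ m
  have hmcard : m = n - S.card := by
    rw [hm_def]
    have h1 : Fintype.card ι = Fintype.card {i : Fin n // ¬ i ∈ S} := rfl
    rw [h1, Fintype.card_subtype_compl, Fintype.card_fin, Fintype.card_coe]
  have hSn : S.card ≤ n := by
    simpa using Finset.card_le_card (Finset.subset_univ S)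
  have hm6 : 6 * r ≤ m := by
    have he : (2 : ℝ) ≤ Real.exp 1 := by
      have := Real.add_one_le_exp 1
      linarith
    have hpos : (0 : ℝ) < 8 * Real.exp 1 := by positivity
    have h1 : (r : ℝ) * (8 * Real.exp 1) ≤ (n : ℝ) - s := by
      rw [← le_div_iff₀ hpos]; exact hr
    have h2 : (6 * r : ℝ) ≤ (n : ℝ) - s := by nlinarith [Nat.cast_nonneg (α := ℝ) r]
    have h3 : ((n : ℝ) - s) ≤ (m : ℝ) := by
      rw [hmcard, Nat.cast_sub hSn]
      have : (S.card : ℝ) ≤ (s : ℝ) := by exact_mod_cast hS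
      linarith
    have : (6 * r : ℝ) ≤ (m : ℝ) := h2.trans h3
    exact_mod_cast this
  -- restriction map
  let res : (Fin n → F) → (ι → F) := fun c i => c i.1
  -- codewords as a Finset
  let CF : Finset (Fin n → F) := {c | c ∈ C}
  -- key distance separation
  have key : ∀ c ∈ CF, ∀ c' ∈ CF, c ≠ c' → 4 * r < hammingDist (res c) (res c') := by
    intro c hc c' hc' hne
    simp only [CF, mem_filter, mem_univ, true_and] at hc hc'
    have h := hC S hS c hc c' hc' hne
    have hcard : hammingDist (res c) (res c')
        = #{i : Fin n | i ∉ S ∧ c i ≠ c' i} := by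
      show #{i : ι | res c i ≠ res c' i} = _
      apply Finset.card_bij (fun (a : ι) _ => a.1)
      · intro a ha
        simp only [mem_filter, mem_univ, true_and] at ha ⊢
        exact ⟨a.2, ha⟩
      · intro a _ b _ hab
        exact Subtype.ext hab
      · intro b hb
        simp only [mem_filter, mem_univ, true_and] at hb
        exact ⟨⟨b, hb.1⟩, by simp [res, hb.2], rfl⟩
    rw [hcard]
    exact h
  -- restrictions of codewords
  let D : Finset (ι → F) := CF.image res
  have hDsep : ∀ d ∈ D, ∀ d' ∈ D, d ≠ d' → 4 * r < hammingDist d d' := by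
    intro d hd d' hd' hne
    obtain ⟨c, hc, rfl⟩ := Finset.mem_image.mp hd
    obtain ⟨c', hc', rfl⟩ := Finset.mem_image.mp hd'
    exact key c hc c' hc' (fun h => hne (by rw [h]))
  -- balls of radius 2r around D are pairwise disjoint
  set B := m.choose (2 * r) * (q - 1) ^ (2 * r) with hB_def
  set A := m.choose r * (q - 1) ^ r with hA_def
  have hdisj : (D : Set (ι → F)).PairwiseDisjoint
      (fun d => ({y : ι → F | hammingDist d y ≤ 2 * r} : Finset (ι → F))) := by
    intro d hd d' hd' hne
    simp only [Finset.disjoint_left]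
    intro y hy hy'
    simp only [mem_filter, mem_univ, true_and] at hy hy'
    have := hDsep d hd d' hd' hne
    have htri : hammingDist d d' ≤ hammingDist d y + hammingDist y d' :=
      hammingDist_triangle d y d'
    rw [hammingDist_comm y d'] at htri
    omega
  -- packing bound : D.card * B ≤ q ^ m
  have hpack : D.card * B ≤ q ^ m := by
    have hball_ge : ∀ d : ι → F,
        B ≤ #{y : ι → F | hammingDist d y ≤ 2 * r} := by
      intro d
      have hsub : ({y : ι → F | hammingDist d y = 2 * r} : Finset (ι → F))
          ⊆ ({y : ι → F | hammingDist d y ≤ 2 * r} : Finset (ι → F)) := by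
        intro y hy
        simp only [Finset.mem_filter, Finset.mem_univ, true_and] at hy ⊢
        omega
      have := Finset.card_le_card hsub
      rwa [sphere_card_eq] at this
    calc D.card * B = ∑ _d ∈ D, B := by rw [Finset.sum_const, smul_eq_mul]
      _ ≤ ∑ d ∈ D, #{y : ι → F | hammingDist d y ≤ 2 * r} :=
          Finset.sum_le_sum (fun d _ => hball_ge d)
      _ = (D.biUnion fun d => ({y : ι → F | hammingDist d y ≤ 2 * r} : Finset (ι → F))).card :=
          (Finset.card_biUnion hdisj).symm
      _ ≤ (Finset.univ : Finset (ι → F)).card := Finset.card_le_card (Finset.subset_univ _)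
      _ = q ^ m := by rw [Finset.card_univ, Fintype.card_fun]
  -- the event set
  set T : Finset (ι → F) :=
    {x : ι → F | ∃ c ∈ C, hammingDist (fun i : ι => c i.1) x ≤ r} with hT_def
  have hunion : T.card ≤ D.card * ((r + 1) * A) := by
    have hsub : T ⊆ D.biUnion fun d => ({y : ι → F | hammingDist d y ≤ r} : Finset (ι → F)) := by
      intro x hx
      simp only [hT_def, mem_filter, mem_univ, true_and] at hx
      obtain ⟨c, hc, hdist⟩ := hx
      rw [Finset.mem_biUnion]
      refine ⟨res c, Finset.mem_image.mpr ⟨c, by simp [CF, hc], rfl⟩, ?_⟩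
      simp only [mem_filter, mem_univ, true_and]
      exact hdist
    calc T.card ≤ (D.biUnion fun d =>
          ({y : ι → F | hammingDist d y ≤ r} : Finset (ι → F))).card :=
          Finset.card_le_card hsub
      _ ≤ D.card * ((r + 1) * A) := by
          refine Finset.card_biUnion_le.trans ?_
          have : ∀ d ∈ D, #{y : ι → F | hammingDist d y ≤ r} ≤ (r + 1) * A :=
            fun d _ => ball_card_le d hm6 hq
          calc ∑ d ∈ D, #{y : ι → F | hammingDist d y ≤ r}
              ≤ D.card • ((r + 1) * A) := Finset.sum_le_card_nsmul _ _ _ this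
            _ = D.card * ((r + 1) * A) := by rw [smul_eq_mul]
  -- comparison of A and B
  have hAB : 2 ^ r * A ≤ B := by
    rw [hA_def, hB_def]
    calc 2 ^ r * (m.choose r * (q - 1) ^ r)
        = (2 ^ r * m.choose r) * (q - 1) ^ r := by ring
      _ ≤ m.choose (2 * r) * (q - 1) ^ (2 * r) :=
          Nat.mul_le_mul (two_pow_mul_choose_le hm6)
            (Nat.pow_le_pow_right (by omega) (by omega))
  have hBpos : 0 < B := by
    rw [hB_def]
    exact Nat.mul_pos (Nat.choose_pos (by omega)) (Nat.pow_pos (by omega))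
  -- combine to the key natural-number inequality
  have hNat : T.card * 2 ^ r ≤ (r + 1) * q ^ m := by
    refine Nat.le_of_mul_le_mul_right ?_ hBpos
    calc T.card * 2 ^ r * B = T.card * (2 ^ r * B) := by ring
      _ ≤ (D.card * ((r + 1) * A)) * (2 ^ r * B) := by
          exact Nat.mul_le_mul_right _ hunion
      _ = (D.card * B) * ((r + 1) * (2 ^ r * A)) := by ring
      _ ≤ (q ^ m) * ((r + 1) * B) := by
          exact Nat.mul_le_mul hpack (Nat.mul_le_mul_left _ hAB)
      _ = (r + 1) * q ^ m * B := by ring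
  -- identify Nat.card with T.card
  have hNcard : Nat.card {x : ι → F // ∃ c ∈ C,
      hammingDist (fun i : ι => c i.1) x ≤ r} = T.card := by
    rw [Nat.card_eq_fintype_card, Fintype.card_subtype]
  -- conclude over the reals
  have hqm : (0 : ℝ) < (q : ℝ) ^ m := by positivity
  have h2r : (0 : ℝ) < (2 : ℝ) ^ r := by positivity
  have hcast : (T.card : ℝ) * 2 ^ r ≤ ((r : ℝ) + 1) * (q : ℝ) ^ m := by
    have := hNat
    push_cast at this ⊢
    exact_mod_cast this
  rw [hNcard, div_le_iff₀ hqm]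
  calc (T.card : ℝ) = T.card * 2 ^ r * ((2 : ℝ) ^ r)⁻¹ := by field_simp
    _ ≤ ((r : ℝ) + 1) * (q : ℝ) ^ m * ((2 : ℝ) ^ r)⁻¹ := by gcongr
    _ = ((r : ℝ) + 1) * ((2 : ℝ) ^ r)⁻¹ * (q : ℝ) ^ m := by ring
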